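/- Let Δ = ∑ᵢ [-1/2, 0] bᵢ ⊂ ℝⁿ be the zonotope of vectors b₁,…,b_d spanning ℝⁿ with ∑_{bᵢ∈ℓ} bᵢ = 0 for every line ℓ through 0. Let F be a facet of Δ with outward inequality ⟨λ, ·⟩ ≤ c (so ⟨λ, x⟩ ≤ c on Δ with equality on F), and set J = {i : ⟨λ, bᵢ⟩ > 0}. If χ ∈ ρ₀ + F for some ρ₀ ∈ ℝⁿ, then for every nonempty 𝖩 ⊆ J, the point χ + ∑_{j∈𝖩} bⱼ lies in ρ₀ + Δ but not in ρ₀ + F. -/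

import Mathlib

/-- The zonotope `∑ᵢ [-1/2,0]·bᵢ`. -/
def zono {V : Type*} [AddCommGroup V] [Module ℝ V] {d : ℕ} (b : Fin d → V) : Set V :=
  {x : V | ∃ β : Fin d → ℝ, (∀ i, β i ∈ Set.Icc (-(1/2) : ℝ) 0) ∧ x = ∑ i, β i • b i}

open scoped Classical

lemma span_swap {V : Type*} [AddCommGroup V] [Module ℝ V] {v w : V} (hv : v ≠ 0)
    (hw : v ∈ Submodule.span ℝ {w}) : Submodule.span ℝ {v} = Submodule.span ℝ {w} := by
  apply le_antisymm
  · exact Submodule.span_le.2 (Set.singleton_subset_iff.2 hw)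
  · obtain ⟨t, rfl⟩ := Submodule.mem_span_singleton.1 hw
    have ht : t ≠ 0 := by rintro rfl; simp at hv
    exact Submodule.span_le.2 (Set.singleton_subset_iff.2
      (Submodule.mem_span_singleton.2 ⟨t⁻¹, by rw [smul_smul, inv_mul_cancel₀ ht, one_smul]⟩))

lemma line_zero {V : Type*} [AddCommGroup V] [Module ℝ V] (l : V →ₗ[ℝ] ℝ) {w x : V}
    (hx : x ∈ Submodule.span ℝ {w}) (hlw : l w ≠ 0) (hlx : l x = 0) :
    x = 0 := by
  obtain ⟨t, rfl⟩ := Submodule.mem_span_singleton.1 hx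
  have : t * l w = 0 := by simpa using hlx
  rcases mul_eq_zero.1 this with h | h
  · simp [h]
  · exact absurd h hlw

section Aux

variable {V : Type*} [AddCommGroup V] [Module ℝ V] {d : ℕ}

/-- sum of positive `l`-values on the line `ℓ`. -/
noncomputable def TT (b : Fin d → V) (l : V →ₗ[ℝ] ℝ) (ℓ : Submodule ℝ V) : ℝ :=
  ∑ k, if 0 < l (b k) ∧ b k ∈ ℓ then l (b k) else 0

/-- sum of negative `l`-values on the line `ℓ`. -/
noncomputable def NN (b : Fin d → V) (l : V →ₗ[ℝ] ℝ) (ℓ : Submodule ℝ V) : ℝ :=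
  ∑ k, if l (b k) < 0 ∧ b k ∈ ℓ then l (b k) else 0

/-- sum of `l`-values of the `𝒥`-vectors on the line `ℓ`. -/
noncomputable def AA (b : Fin d → V) (l : V →ₗ[ℝ] ℝ) (𝒥 : Finset (Fin d))
    (ℓ : Submodule ℝ V) : ℝ :=
  ∑ k, if k ∈ 𝒥 ∧ b k ∈ ℓ then l (b k) else 0

lemma TT_add_NN (b : Fin d → V) (l : V →ₗ[ℝ] ℝ)
    (hqs : ∀ ℓ : Submodule ℝ V, Module.finrank ℝ ↥ℓ = 1 →
      (∑ i : Fin d, if b i ∈ ℓ then b i else 0) = 0)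
    {ℓ : Submodule ℝ V} (hfin : Module.finrank ℝ ↥ℓ = 1) :
    TT b l ℓ + NN b l ℓ = 0 := by
  have h0 : (∑ k : Fin d, if b k ∈ ℓ then l (b k) else 0) = 0 := by
    have := congrArg l (hqs ℓ hfin)
    rw [map_sum] at this
    simpa [apply_ite l] using this
  have hsplit : TT b l ℓ + NN b l ℓ = ∑ k : Fin d, if b k ∈ ℓ then l (b k) else 0 := by
    rw [TT, NN, ← Finset.sum_add_distrib]
    apply Finset.sum_congr rfl
    intro k _
    by_cases hm : b k ∈ ℓ <;> rcases lt_trichotomy (l (b k)) 0 with h | h | h <;>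
      simp [hm, h, not_lt.2 h.le]
  rw [hsplit, h0]

lemma AA_nonneg (b : Fin d → V) (l : V →ₗ[ℝ] ℝ) (𝒥 : Finset (Fin d))
    (h𝒥pos : ∀ j ∈ 𝒥, 0 < l (b j)) (ℓ : Submodule ℝ V) : 0 ≤ AA b l 𝒥 ℓ := by
  apply Finset.sum_nonneg
  intro k _
  split_ifs with h
  · exact (h𝒥pos k h.1).le
  · exact le_rfl

lemma AA_le_TT (b : Fin d → V) (l : V →ₗ[ℝ] ℝ) (𝒥 : Finset (Fin d))
    (h𝒥pos : ∀ j ∈ 𝒥, 0 < l (b j)) (ℓ : Submodule ℝ V) : AA b l 𝒥 ℓ ≤ TT b l ℓ := by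
  apply Finset.sum_le_sum
  intro k _
  split_ifs with h1 h2 h2
  · exact le_rfl
  · exact absurd ⟨h𝒥pos k h1.1, h1.2⟩ h2
  · exact (h2.1).le
  · exact le_rfl

lemma TT_pos_of_pos (b : Fin d → V) (l : V →ₗ[ℝ] ℝ) {i : Fin d}
    (hi : 0 < l (b i)) {ℓ : Submodule ℝ V} (hmem : b i ∈ ℓ) : 0 < TT b l ℓ := by
  have h1 : l (b i) ≤ TT b l ℓ := by
    have := Finset.single_le_sum (f := fun k => if 0 < l (b k) ∧ b k ∈ ℓ then l (b k) else 0)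
      (fun k _ => by split_ifs with h; exacts [h.1.le, le_rfl]) (Finset.mem_univ i)
    simpa [TT, hi, hmem] using this
  linarith

lemma NN_le (b : Fin d → V) (l : V →ₗ[ℝ] ℝ) {i : Fin d}
    (hi : l (b i) < 0) {ℓ : Submodule ℝ V} (hmem : b i ∈ ℓ) : NN b l ℓ ≤ l (b i) := by
  have h1 : NN b l ℓ ≤ ∑ k : Fin d, if k = i then l (b i) else 0 := by
    apply Finset.sum_le_sum
    intro k _
    split_ifs with h1 h2 h2
    · subst h2; exact le_rfl
    · exact h1.1.le
    · subst h2; exact absurd ⟨hi, hmem⟩ h1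
    · exact le_rfl
  simpa using h1

end Aux

open scoped Classical in
/-- Let `Δ = ∑ᵢ [-1/2,0]bᵢ` be the zonotope of a quasi-symmetric spanning collection,
`F = {x ∈ Δ | ⟨λ,x⟩ = c}` the facet on which the supporting functional `λ` (with
`⟨λ,·⟩ ≥ c` on `Δ`) is extremal, and `J = {i : ⟨λ,bᵢ⟩ > 0}`. If `χ ∈ ρ₀ + F`, then
for every nonempty `𝖩 ⊆ J` the point `χ + ∑_{j∈𝖩} bⱼ` lies in `ρ₀ + Δ` but not in
`ρ₀ + F`. -/
theorem stmt14 {V : Type*} [AddCommGroup V] [Module ℝ V] [FiniteDimensional ℝ V]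
    {d : ℕ} (b : Fin d → V)
    (hspan : Submodule.span ℝ (Set.range b) = ⊤)
    (hqs : ∀ ℓ : Submodule ℝ V, Module.finrank ℝ ↥ℓ = 1 →
      (∑ i : Fin d, if b i ∈ ℓ then b i else 0) = 0)
    (l : V →ₗ[ℝ] ℝ) (c : ℝ)
    (hsupp : ∀ x ∈ zono b, c ≤ l x)
    (hne : ∃ x ∈ zono b, l x = c)
    (ρ₀ χ : V) (hχ : χ - ρ₀ ∈ {x ∈ zono b | l x = c}) :
    ∀ 𝒥 : Finset (Fin d), 𝒥.Nonempty → (∀ j ∈ 𝒥, 0 < l (b j)) →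
      (χ + ∑ j ∈ 𝒥, b j) - ρ₀ ∈ zono b ∧
      (χ + ∑ j ∈ 𝒥, b j) - ρ₀ ∉ {x ∈ zono b | l x = c} := by
  obtain ⟨⟨β, hβ, hβe⟩, hc⟩ := hχ
  intro 𝒥 h𝒥ne h𝒥pos
  have hsplit : (χ + ∑ j ∈ 𝒥, b j) - ρ₀ = (χ - ρ₀) + ∑ j ∈ 𝒥, b j := by abel
  have hval : l ((χ + ∑ j ∈ 𝒥, b j) - ρ₀) = c + ∑ j ∈ 𝒥, l (b j) := by
    rw [hsplit, map_add, hc, map_sum]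
  have hsumpos : 0 < ∑ j ∈ 𝒥, l (b j) := Finset.sum_pos h𝒥pos h𝒥ne
  -- the coefficients on the facet are forced
  have hlsum : ∑ i, β i * l (b i) = c := by
    have h1 := congrArg l hβe
    rw [map_sum] at h1
    simp only [map_smul, smul_eq_mul] at h1
    rw [← hc, h1]
  have hx0 : (∑ i, (if 0 < l (b i) then (-(1/2) : ℝ) else 0) • b i) ∈ zono b :=
    ⟨_, fun i => by split_ifs <;> norm_num, rfl⟩
  have hterm : ∀ i ∈ Finset.univ,
      (if 0 < l (b i) then -(1/2) * l (b i) else 0) ≤ β i * l (b i) := by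
    intro i _
    split_ifs with h
    · nlinarith [(hβ i).1]
    · nlinarith [(hβ i).2, not_lt.1 h]
  have hsums : ∑ i, (if 0 < l (b i) then -(1/2) * l (b i) else 0) = ∑ i, β i * l (b i) := by
    refine le_antisymm (Finset.sum_le_sum hterm) ?_
    rw [hlsum]
    have h2 := hsupp _ hx0
    have h3 : l (∑ i, (if 0 < l (b i) then (-(1/2) : ℝ) else 0) • b i)
        = ∑ i, (if 0 < l (b i) then -(1/2) * l (b i) else 0) := by
      rw [map_sum]
      apply Finset.sum_congr rfl
      intro i _
      split_ifs <;> simp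
    rw [h3] at h2
    exact h2
  have hkey := (Finset.sum_eq_sum_iff_of_le hterm).1 hsums
  have βpos : ∀ i, 0 < l (b i) → β i = -(1/2) := by
    intro i h
    have h1 := hkey i (Finset.mem_univ i)
    rw [if_pos h] at h1
    exact mul_right_cancel₀ h.ne' h1.symm
  have βneg : ∀ i, l (b i) < 0 → β i = 0 := by
    intro i h
    have h1 := hkey i (Finset.mem_univ i)
    rw [if_neg (not_lt.2 h.le)] at h1
    rcases mul_eq_zero.1 h1.symm with h' | h'
    · exact h'
    · exact absurd h' h.ne
  -- the new coefficients
  set R : Fin d → ℝ := fun i =>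
    AA b l 𝒥 (Submodule.span ℝ {b i}) / TT b l (Submodule.span ℝ {b i}) with hRdef
  set β' : Fin d → ℝ := fun i =>
    if 0 < l (b i) then min (R i) (1/2) - 1/2
    else if l (b i) < 0 then min (R i) (1/2) - R i else β i with hβ'def
  have hR01 : ∀ i, l (b i) ≠ 0 → 0 ≤ R i ∧ R i ≤ 1 := by
    intro i h
    have hbne : b i ≠ 0 := fun he => h (by rw [he]; exact map_zero l)
    have hTpos : 0 < TT b l (Submodule.span ℝ {b i}) := by
      rcases lt_or_gt_of_ne h with h' | h'
      · have hNle := NN_le b l h' (Submodule.mem_span_singleton_self _)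
        have hTN := TT_add_NN b l hqs (finrank_span_singleton hbne)
        linarith
      · exact TT_pos_of_pos b l h' (Submodule.mem_span_singleton_self _)
    rw [hRdef]
    exact ⟨div_nonneg (AA_nonneg b l 𝒥 h𝒥pos _) hTpos.le,
      (div_le_one hTpos).2 (AA_le_TT b l 𝒥 h𝒥pos _)⟩
  have hβ'mem : ∀ i, β' i ∈ Set.Icc (-(1/2) : ℝ) 0 := by
    intro i
    rw [hβ'def]
    dsimp only
    split_ifs with h1 h2
    · obtain ⟨h0, -⟩ := hR01 i h1.ne'
      have hmin : (0 : ℝ) ≤ min (R i) (1/2) := le_min h0 (by norm_num)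
      exact ⟨by linarith, by linarith [min_le_right (R i) (1/2 : ℝ)]⟩
    · obtain ⟨h0, hle1⟩ := hR01 i h2.ne
      constructor
      · rcases le_total (R i) (1/2 : ℝ) with h' | h'
        · rw [min_eq_left h']; linarith
        · rw [min_eq_right h']; linarith
      · linarith [min_le_left (R i) (1/2 : ℝ)]
    · exact hβ i
  -- the key vector identity
  have key : ∑ i, (β' i - β i) • b i = ∑ j ∈ 𝒥, b j := by
    have hind : ∑ j ∈ 𝒥, b j = ∑ i, (if i ∈ 𝒥 then b i else 0) := by
      rw [Finset.sum_ite_mem, Finset.univ_inter]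
    rw [hind, ← sub_eq_zero, ← Finset.sum_sub_distrib]
    set g : Fin d → V := fun i =>
      (β' i - β i) • b i - (if i ∈ 𝒥 then b i else 0) with hgdef
    rw [← Finset.sum_fiberwise_of_maps_to (g := fun i => Submodule.span ℝ {b i})
      (t := Finset.univ.image fun i => Submodule.span ℝ {b i})
      (fun i _ => Finset.mem_image_of_mem _ (Finset.mem_univ i)) g]
    apply Finset.sum_eq_zero
    intro ℓ hℓ
    by_cases hcase : ∀ i, Submodule.span ℝ {b i} = ℓ → l (b i) = 0
    · apply Finset.sum_eq_zero
      intro i hi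
      have h0 : l (b i) = 0 := hcase i (Finset.mem_filter.1 hi).2
      have hn : i ∉ 𝒥 := fun hm => absurd (h𝒥pos i hm) (by rw [h0]; exact lt_irrefl 0)
      have hb' : β' i = β i := by
        rw [hβ'def]; dsimp only
        rw [if_neg (by rw [h0]; exact lt_irrefl 0), if_neg (by rw [h0]; exact lt_irrefl 0)]
      rw [hgdef]; dsimp only
      rw [hb', sub_self, zero_smul, if_neg hn, sub_zero]
    · push_neg at hcase
      obtain ⟨i₁, hLi₁, hne₁⟩ := hcase
      have hbne₁ : b i₁ ≠ 0 := fun he => hne₁ (by rw [he]; exact map_zero l)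
      have hfin : Module.finrank ℝ ↥ℓ = 1 := by
        rw [← hLi₁]; exact finrank_span_singleton hbne₁
      have hTN : TT b l ℓ + NN b l ℓ = 0 := TT_add_NN b l hqs hfin
      have hTpos : 0 < TT b l ℓ := by
        rcases lt_or_gt_of_ne hne₁ with h' | h'
        · have := NN_le b l h' (hLi₁ ▸ Submodule.mem_span_singleton_self (b i₁))
          linarith
        · exact TT_pos_of_pos b l h' (hLi₁ ▸ Submodule.mem_span_singleton_self (b i₁))
      have hmemiff : ∀ i, l (b i) ≠ 0 → b i ∈ ℓ → Submodule.span ℝ {b i} = ℓ := by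
        intro i h hm
        have hbne : b i ≠ 0 := fun he => h (by rw [he]; exact map_zero l)
        rw [← hLi₁] at hm ⊢
        exact span_swap hbne hm
      -- the fiber sum lies in ℓ
      have hSmem : (∑ i ∈ Finset.univ.filter
          (fun i => Submodule.span ℝ {b i} = ℓ), g i) ∈ ℓ := by
        apply Submodule.sum_mem
        intro i hi
        have hLi : Submodule.span ℝ {b i} = ℓ := (Finset.mem_filter.1 hi).2
        have hbmem : b i ∈ ℓ := hLi ▸ Submodule.mem_span_singleton_self (b i)
        rw [hgdef]; dsimp only
        refine sub_mem (Submodule.smul_mem _ _ hbmem) ?_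
        split_ifs
        · exact hbmem
        · exact Submodule.zero_mem ℓ
      -- the functional vanishes on the fiber sum
      have hlS : l (∑ i ∈ Finset.univ.filter
          (fun i => Submodule.span ℝ {b i} = ℓ), g i) = 0 := by
        rw [map_sum, Finset.sum_filter]
        have hbig : ∑ i : Fin d, (if Submodule.span ℝ {b i} = ℓ then l (g i) else 0)
            = ∑ i : Fin d,
              (min (AA b l 𝒥 ℓ / TT b l ℓ) (1/2) *
                  (if 0 < l (b i) ∧ b i ∈ ℓ then l (b i) else 0)
                + (min (AA b l 𝒥 ℓ / TT b l ℓ) (1/2) - AA b l 𝒥 ℓ / TT b l ℓ) *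
                  (if l (b i) < 0 ∧ b i ∈ ℓ then l (b i) else 0)
                - (if i ∈ 𝒥 ∧ b i ∈ ℓ then l (b i) else 0)) := by
          apply Finset.sum_congr rfl
          intro i _
          by_cases hLi : Submodule.span ℝ {b i} = ℓ
          · rw [if_pos hLi]
            have hbmem : b i ∈ ℓ := hLi ▸ Submodule.mem_span_singleton_self (b i)
            have hlg : l (g i) = (β' i - β i) * l (b i) -
                (if i ∈ 𝒥 then l (b i) else 0) := by
              rw [hgdef]; dsimp only
              rw [map_sub, map_smul, smul_eq_mul, apply_ite l, map_zero]
            rcases lt_trichotomy (l (b i)) 0 with h | h | h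
            · have hβi : β i = 0 := βneg i h
              have hβ'i : β' i = min (AA b l 𝒥 ℓ / TT b l ℓ) (1/2)
                  - AA b l 𝒥 ℓ / TT b l ℓ := by
                rw [hβ'def]; dsimp only
                rw [if_neg (not_lt.2 h.le), if_pos h, hRdef]; dsimp only
                rw [hLi]
              have hn : i ∉ 𝒥 := fun hm => absurd (h𝒥pos i hm) (not_lt.2 h.le)
              rw [hlg, hβi, hβ'i, if_neg hn,
                if_neg (fun hc : 0 < l (b i) ∧ b i ∈ ℓ => absurd hc.1 (asymm h)),
                if_pos (show l (b i) < 0 ∧ b i ∈ ℓ from ⟨h, hbmem⟩),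
                if_neg (fun hc : i ∈ 𝒥 ∧ b i ∈ ℓ => hn hc.1)]
              ring
            · have hn : i ∉ 𝒥 := fun hm =>
                absurd (h𝒥pos i hm) (by rw [h]; exact lt_irrefl 0)
              have hβ'i : β' i = β i := by
                rw [hβ'def]; dsimp only
                rw [if_neg (by rw [h]; exact lt_irrefl 0),
                  if_neg (by rw [h]; exact lt_irrefl 0)]
              rw [hlg, hβ'i, sub_self, zero_mul, if_neg hn,
                if_neg (fun hc : 0 < l (b i) ∧ b i ∈ ℓ => absurd h hc.1.ne'),
                if_neg (fun hc : l (b i) < 0 ∧ b i ∈ ℓ => absurd h hc.1.ne),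
                if_neg (fun hc : i ∈ 𝒥 ∧ b i ∈ ℓ => hn hc.1)]
              ring
            · have hβi : β i = -(1/2) := βpos i h
              have hβ'i : β' i = min (AA b l 𝒥 ℓ / TT b l ℓ) (1/2) - 1/2 := by
                rw [hβ'def]; dsimp only
                rw [if_pos h, hRdef]; dsimp only
                rw [hLi]
              by_cases hi𝒥 : i ∈ 𝒥
              · rw [hlg, hβi, hβ'i, if_pos hi𝒥,
                  if_pos (show 0 < l (b i) ∧ b i ∈ ℓ from ⟨h, hbmem⟩),
                  if_neg (fun hc : l (b i) < 0 ∧ b i ∈ ℓ => absurd hc.1 (asymm h)),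
                  if_pos (show i ∈ 𝒥 ∧ b i ∈ ℓ from ⟨hi𝒥, hbmem⟩)]
                ring
              · rw [hlg, hβi, hβ'i, if_neg hi𝒥,
                  if_pos (show 0 < l (b i) ∧ b i ∈ ℓ from ⟨h, hbmem⟩),
                  if_neg (fun hc : l (b i) < 0 ∧ b i ∈ ℓ => absurd hc.1 (asymm h)),
                  if_neg (fun hc : i ∈ 𝒥 ∧ b i ∈ ℓ => hi𝒥 hc.1)]
                ring
          · rw [if_neg hLi,
              if_neg (fun hc : 0 < l (b i) ∧ b i ∈ ℓ => hLi (hmemiff i hc.1.ne' hc.2)),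
              if_neg (fun hc : l (b i) < 0 ∧ b i ∈ ℓ => hLi (hmemiff i hc.1.ne hc.2)),
              if_neg (fun hc : i ∈ 𝒥 ∧ b i ∈ ℓ => hLi (hmemiff i (h𝒥pos i hc.1).ne' hc.2))]
            ring
        rw [hbig, Finset.sum_sub_distrib, Finset.sum_add_distrib, ← Finset.mul_sum,
          ← Finset.mul_sum, ← TT, ← NN, ← AA]
        have hcancel : AA b l 𝒥 ℓ / TT b l ℓ * TT b l ℓ = AA b l 𝒥 ℓ :=
          div_mul_cancel₀ _ hTpos.ne'
        have hNN : NN b l ℓ = -TT b l ℓ := by linarith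
        rw [hNN]
        linear_combination hcancel
      exact line_zero l (show _ ∈ Submodule.span ℝ {b i₁} by rw [hLi₁]; exact hSmem)
        hne₁ hlS
  refine ⟨⟨β', hβ'mem, ?_⟩, ?_⟩
  · rw [hsplit, hβe, ← key, ← Finset.sum_add_distrib]
    apply Finset.sum_congr rfl
    intro i _
    rw [← add_smul]
    congr 1
    ring
  · rintro ⟨-, hceq⟩
    rw [hval] at hceq
    linarith
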